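/- Let Q be a primitive integral binary quadratic form irreducible over ℚ, p ∤ 2·disc(Q) a prime, ν ≥ 0. Then ρ(1,1,p^ν) = φ(p^ν)·(1 + (disc(Q)/p))·⌈ν/2⌉ + p^{2(ν − ⌈ν/2⌉)}, and in particular ρ(1,1,p^ν) ≤ (ν+1)p^ν, where ρ(1,1,p^ν) = #{x ∈ [0,p^ν)² : p^ν | Q(x)}. -/

import Mathlib

open Finset

def rhoQ (a b c : ℤ) (m : ℕ) : ℕ :=
  ((Finset.range m ×ˢ Finset.range m).filter
    (fun x => (m : ℤ) ∣ a * x.1 ^ 2 + b * x.2 ^ 2 + c * x.1 * x.2)).card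


lemma transfer_count (m : ℕ) [NeZero m] (P : ZMod m × ZMod m → Prop) [DecidablePred P] :
    ((Finset.range m ×ˢ Finset.range m).filter
      (fun x : ℕ × ℕ => P ((x.1 : ZMod m), (x.2 : ZMod m)))).card
    = (Finset.univ.filter P).card := by
  apply Finset.card_bij' (i := fun x _ => ((x.1 : ZMod m), (x.2 : ZMod m)))
    (j := fun z _ => (z.1.val, z.2.val))
  · intro x hx
    simp only [mem_filter, mem_product, mem_range] at hx ⊢
    exact ⟨mem_univ _, hx.2⟩
  · intro z hz
    simp only [mem_filter, mem_product, mem_range] at hz ⊢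
    refine ⟨⟨ZMod.val_lt _, ZMod.val_lt _⟩, ?_⟩
    simpa [ZMod.natCast_val, ZMod.cast_id] using hz.2
  · intro x hx
    simp only [mem_filter, mem_product, mem_range] at hx
    simp [ZMod.val_cast_of_lt hx.1.1, ZMod.val_cast_of_lt hx.1.2]
  · intro z hz
    simp [ZMod.natCast_val, ZMod.cast_id]

lemma rhoQ_eq_cnt (a b c : ℤ) (m : ℕ) [NeZero m] :
    rhoQ a b c m = (Finset.univ.filter
      (fun z : ZMod m × ZMod m => (a:ZMod m) * z.1^2 + (b:ZMod m) * z.2^2 + (c:ZMod m) * z.1 * z.2 = 0)).card := by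
  have h1 : rhoQ a b c m = ((Finset.range m ×ˢ Finset.range m).filter
      (fun x : ℕ × ℕ => ((fun z : ZMod m × ZMod m => (a:ZMod m) * z.1^2 + (b:ZMod m) * z.2^2 + (c:ZMod m) * z.1 * z.2 = 0) ((x.1 : ZMod m), (x.2 : ZMod m))))).card := by
    rw [rhoQ]
    congr 1
    apply filter_congr
    intro x _
    simp only
    rw [← ZMod.intCast_zmod_eq_zero_iff_dvd]
    push_cast
    simp
  rw [h1]
  exact transfer_count m (fun z : ZMod m × ZMod m => (a:ZMod m) * z.1^2 + (b:ZMod m) * z.2^2 + (c:ZMod m) * z.1 * z.2 = 0)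


/-- Generic constant-fiber counting. -/
lemma fiber_count {α β : Type*} [Fintype α] [Fintype β] [DecidableEq β] (π : α → β) (n : ℕ)
    (hfib : ∀ b : β, (Finset.univ.filter (fun a => π a = b)).card = n)
    (P : β → Prop) [DecidablePred P] :
    (Finset.univ.filter (fun a => P (π a))).card = n * (Finset.univ.filter P).card := by
  rw [Finset.card_eq_sum_card_fiberwise (f := π) (t := Finset.univ.filter P)
    (fun x hx => by simpa using (Finset.mem_filter.mp hx).2)]
  rw [Finset.sum_congr rfl (fun b hb => ?_), Finset.sum_const, smul_eq_mul, mul_comm]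
  have hPb : P b := (Finset.mem_filter.mp hb).2
  rw [← hfib b]
  congr 1
  ext x
  simp only [Finset.mem_filter, Finset.mem_univ, true_and]
  constructor
  · rintro ⟨-, h⟩; exact h
  · intro h; exact ⟨h ▸ hPb, h⟩

/-- fibers of `ZMod (n*k) → ZMod n` have cardinality `k`. -/
lemma zmod_cast_fiber_card (n k : ℕ) [NeZero n] [NeZero k] (b : ZMod n) :
    (Finset.univ.filter (fun w : ZMod (n*k) =>
      ZMod.castHom (dvd_mul_right n k) (ZMod n) w = b)).card = k := by
  haveI : NeZero (n*k) := ⟨mul_ne_zero (NeZero.ne n) (NeZero.ne k)⟩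
  have key : (Finset.univ.filter (fun w : ZMod (n*k) =>
      ZMod.castHom (dvd_mul_right n k) (ZMod n) w = b)).card = (Finset.range k).card := by
    apply Finset.card_bij' (i := fun w _ => w.val / n)
      (j := fun t _ => ((b.val + n * t : ℕ) : ZMod (n*k)))
    · intro w hw
      simp only [Finset.mem_filter, Finset.mem_univ, true_and] at hw
      have h1 : w.val % n = b.val := by
        have : (ZMod.castHom (dvd_mul_right n k) (ZMod n) w) = ((w.val : ℕ) : ZMod n) := by
          simp [ZMod.castHom_apply, ZMod.natCast_val]
        rw [this] at hw
        have := congrArg ZMod.val hw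
        rwa [ZMod.val_natCast] at this
      simp only [Finset.mem_range]
      exact Nat.div_lt_of_lt_mul (ZMod.val_lt w)
    · intro t ht
      simp only [Finset.mem_range] at ht
      simp only [Finset.mem_filter, Finset.mem_univ, true_and]
      rw [map_natCast (ZMod.castHom (dvd_mul_right n k) (ZMod n)) (b.val + n*t)]
      push_cast
      simp [ZMod.natCast_self, ZMod.natCast_val, ZMod.cast_id]
    · intro w hw
      simp only [Finset.mem_filter, Finset.mem_univ, true_and] at hw
      have h1 : w.val % n = b.val := by
        have : (ZMod.castHom (dvd_mul_right n k) (ZMod n) w) = ((w.val : ℕ) : ZMod n) := by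
          simp [ZMod.castHom_apply, ZMod.natCast_val]
        rw [this] at hw
        have := congrArg ZMod.val hw
        rwa [ZMod.val_natCast] at this
      have h2 : b.val + n * (w.val / n) = w.val := by
        conv_rhs => rw [← Nat.mod_add_div w.val n, h1]
      rw [h2, ZMod.natCast_val, ZMod.cast_id]
    · intro t ht
      simp only [Finset.mem_range] at ht
      have hlt : b.val + n * t < n * k := by
        have := ZMod.val_lt b
        nlinarith [Nat.succ_le_of_lt ht]
      rw [ZMod.val_natCast_of_lt hlt]
      have hn : 0 < n := Nat.pos_of_ne_zero (NeZero.ne n)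
      rw [Nat.add_mul_div_left _ _ hn, Nat.div_eq_of_lt (ZMod.val_lt b), zero_add]
  rw [key, Finset.card_range]


instance neZeroPPow (p : ℕ) [Fact p.Prime] (ν : ℕ) : NeZero (p^ν) :=
  ⟨pow_ne_zero ν (Nat.Prime.pos (Fact.out)).ne'⟩

lemma units_filter_card (n : ℕ) [NeZero n] :
    (Finset.univ.filter (fun y : ZMod n => IsUnit y)).card = n.totient := by
  rw [← ZMod.card_units_eq_totient n]
  rw [Fintype.card]
  symm
  apply Finset.card_bij (i := fun (u : (ZMod n)ˣ) _ => (u : ZMod n))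
  · intro u _
    simp only [Finset.mem_filter, Finset.mem_univ, true_and]
    exact u.isUnit
  · intro u1 _ u2 _ h
    exact Units.ext h
  · intro y hy
    have hy' : IsUnit y := (Finset.mem_filter.mp hy).2
    exact ⟨hy'.unit, Finset.mem_univ _, hy'.unit_spec⟩

lemma line_card (n : ℕ) [NeZero n] (α β : ZMod n) (hα : IsUnit α) :
    (Finset.univ.filter (fun z : ZMod n × ZMod n =>
      α * z.1 + β * z.2 = 0 ∧ IsUnit z.2)).card = n.totient := by
  rw [← units_filter_card n]
  apply Finset.card_bij' (i := fun z _ => z.2) (j := fun y _ => (-(α⁻¹ * β * y), y))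
  · intro z hz
    simp only [Finset.mem_filter, Finset.mem_univ, true_and] at hz ⊢
    exact hz.2
  · intro y hy
    simp only [Finset.mem_filter, Finset.mem_univ, true_and] at hy ⊢
    constructor
    · have hinv : α * α⁻¹ = 1 := ZMod.mul_inv_of_unit _ hα
      linear_combination (-(β*y)) * hinv
    · exact hy
  · intro z hz
    simp only [Finset.mem_filter, Finset.mem_univ, true_and] at hz
    have hinv : α⁻¹ * α = 1 := ZMod.inv_mul_of_unit _ hα
    have heq := hz.1
    ext
    · show -(α⁻¹ * β * z.2) = z.1
      linear_combination (-(α⁻¹)) * heq + z.1 * hinv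
    · rfl
  · intro y _
    rfl

variable (p : ℕ) [Fact p.Prime]


/-- In `ZMod (p^ν)`, `x` is a unit iff its residue mod `p` is nonzero. -/
lemma isUnit_iff_residue (ν : ℕ) (hν : ν ≠ 0) (x : ZMod (p^ν)) :
    haveI : NeZero (p^ν) := ⟨pow_ne_zero ν (Fact.out (p := p.Prime)).pos.ne'⟩
    (IsUnit x ↔ ZMod.castHom (dvd_pow_self p hν) (ZMod p) x ≠ 0) := by
  haveI : NeZero (p^ν) := ⟨pow_ne_zero ν (Fact.out (p := p.Prime)).pos.ne'⟩
  have hp : p.Prime := Fact.out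
  have hx : x = ((x.val : ℕ) : ZMod (p^ν)) := by simp [ZMod.natCast_val, ZMod.cast_id]
  have h1 : ZMod.castHom (dvd_pow_self p hν) (ZMod p) x = ((x.val : ℕ) : ZMod p) := by
    conv_lhs => rw [hx]
    rw [map_natCast]
  rw [h1, Ne, ZMod.natCast_eq_zero_iff]
  conv_lhs => rw [hx]
  rw [ZMod.isUnit_iff_coprime]
  rw [Nat.coprime_pow_right_iff (Nat.pos_of_ne_zero hν)]
  exact ⟨fun h => (Nat.Prime.coprime_iff_not_dvd hp).mp h.symm,
    fun h => ((Nat.Prime.coprime_iff_not_dvd hp).mpr h).symm⟩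

lemma isUnit_intCast_of_not_dvd (ν : ℕ) (t : ℤ) (ht : ¬ (p:ℤ) ∣ t) :
    IsUnit ((t : ℤ) : ZMod (p^ν)) := by
  have hp : p.Prime := Fact.out
  have h1 : IsCoprime ((p:ℤ)^ν) t :=
    (((Nat.prime_iff_prime_int.mp hp).coprime_iff_not_dvd).mpr ht).pow_left
  obtain ⟨u, v, huv⟩ := h1
  have := congrArg (fun z : ℤ => (z : ZMod (p^ν))) huv
  push_cast at this
  refine IsUnit.of_mul_eq_one (v : ZMod (p^ν)) ?_
  rw [show ((p:ZMod (p^ν))) ^ ν = 0 from ?_] at this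
  · linear_combination this
  · have : ((p:ZMod (p^ν)))^ν = (((p^ν : ℕ)) : ZMod (p^ν)) := by push_cast; ring
    rw [this, ZMod.natCast_self]


lemma sqrt_lift (hodd : p ≠ 2) (D : ℤ) (hpD : ¬ (p:ℤ) ∣ D)
    (h1 : ∃ s : ℤ, (p:ℤ) ∣ s^2 - D) (ν : ℕ) : ∃ t : ℤ, (p:ℤ)^ν ∣ t^2 - D := by
  have hp : p.Prime := Fact.out
  induction ν with
  | zero => exact ⟨0, by simp⟩
  | succ ν ih =>
    rcases ih with ⟨t, ht⟩
    rcases Nat.eq_zero_or_pos ν with hν | hν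
    · subst hν
      rcases h1 with ⟨s, hs⟩
      exact ⟨s, by simpa using hs⟩
    · have hν' : ν ≠ 0 := hν.ne'
      have hpd1 : (p:ℤ) ∣ t^2 - D := dvd_trans (dvd_pow_self _ hν') ht
      have hP : Prime (p:ℤ) := Nat.prime_iff_prime_int.mp hp
      have hpt : ¬ (p:ℤ) ∣ t := by
        intro hdvd
        have h2 : (p:ℤ) ∣ t^2 := by rw [sq]; exact hdvd.mul_right t
        have h3 : (p:ℤ) ∣ t^2 - (t^2 - D) := dvd_sub h2 hpd1
        simp only [sub_sub_cancel] at h3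
        exact hpD h3
      have hp2t : ¬ (p:ℤ) ∣ 2*t := by
        intro hdvd
        rcases hP.dvd_mul.mp hdvd with h | h
        · have h2 : p ∣ 2 := Int.natCast_dvd_natCast.mp (by exact_mod_cast h)
          exact hodd ((Nat.prime_dvd_prime_iff_eq hp Nat.prime_two).mp h2)
        · exact hpt h
      have h2t0 : ((2*t : ℤ) : ZMod p) ≠ 0 := by
        rw [Ne, ZMod.intCast_zmod_eq_zero_iff_dvd]; exact hp2t
      have hu : IsUnit ((2*t : ℤ) : ZMod p) := by
        haveI : Fact p.Prime := ⟨hp⟩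
        exact isUnit_iff_ne_zero.mpr h2t0
      set u := ((2*t : ℤ) : ZMod p)⁻¹ with hu_def
      set r : ℤ := (u.val : ℤ) with hr_def
      have h2tr : (p:ℤ) ∣ 2*t*r - 1 := by
        rw [hr_def]
        rw [← ZMod.intCast_zmod_eq_zero_iff_dvd]
        push_cast
        rw [show ((u.val : ℕ) : ZMod p) = u from by simp [ZMod.natCast_val, ZMod.cast_id]]
        have h5 : ((2*t : ℤ) : ZMod p) * u = 1 := by
          rw [hu_def]; exact ZMod.mul_inv_of_unit _ hu
        push_cast at h5
        linear_combination h5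
      rcases ht with ⟨e, he⟩
      refine ⟨t - e*r*(p:ℤ)^ν, ?_⟩
      have key : (t - e*r*(p:ℤ)^ν)^2 - D
          = (p:ℤ)^ν * (e*(1-2*t*r)) + ((p:ℤ)^ν)^2 * (e^2*r^2) := by
        linear_combination he
      rw [key, pow_succ]
      apply dvd_add
      · refine mul_dvd_mul_left _ (Dvd.dvd.mul_left ?_ e)
        have := dvd_neg.mpr h2tr
        rwa [neg_sub] at this
      · apply dvd_mul_of_dvd_left
        calc (p:ℤ)^ν * (p:ℤ) ∣ (p:ℤ)^ν * (p:ℤ)^ν := by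
              exact mul_dvd_mul_left _ (dvd_pow_self _ hν')
          _ = ((p:ℤ)^ν)^2 := by ring


lemma two_not_dvd (hodd : p ≠ 2) : ¬ (p:ℤ) ∣ 2 := by
  intro h
  have h2 : p ∣ 2 := Int.natCast_dvd_natCast.mp (by exact_mod_cast h)
  exact hodd ((Nat.prime_dvd_prime_iff_eq Fact.out Nat.prime_two).mp h2)

lemma field_sol_zero (hodd : p ≠ 2) (a b c : ℤ) (ha : ((a:ℤ) : ZMod p) ≠ 0)
    (hns : ¬ IsSquare (((c^2 - 4*a*b : ℤ)) : ZMod p)) (X Y : ZMod p)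
    (hQ : ((a:ℤ):ZMod p) * X^2 + ((b:ℤ):ZMod p) * Y^2 + ((c:ℤ):ZMod p) * X*Y = 0) :
    X = 0 ∧ Y = 0 := by
  have hp : p.Prime := Fact.out
  have h2 : (2 : ZMod p) ≠ 0 := by
    rw [show (2:ZMod p) = ((2:ℤ):ZMod p) by norm_cast, Ne, ZMod.intCast_zmod_eq_zero_iff_dvd]
    exact two_not_dvd p hodd
  by_cases hY : Y = 0
  · subst hY
    refine ⟨?_, rfl⟩
    have : ((a:ℤ):ZMod p) * X^2 = 0 := by linear_combination hQ
    rcases mul_eq_zero.mp this with h | h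
    · exact absurd h ha
    · exact pow_eq_zero_iff (n := 2) (by norm_num) |>.mp h
  · exfalso
    apply hns
    refine ⟨(2*((a:ℤ):ZMod p)*X + ((c:ℤ):ZMod p)*Y) * Y⁻¹, ?_⟩
    have hYinv : Y * Y⁻¹ = 1 := ZMod.mul_inv_of_unit _ (isUnit_iff_ne_zero.mpr hY)
    push_cast
    linear_combination (-(((c:ℤ):ZMod p)^2 - 4*((a:ℤ):ZMod p)*((b:ℤ):ZMod p)) * (Y*Y⁻¹ + 1)) * hYinv
      - 4*((a:ℤ):ZMod p)*Y⁻¹^2 * hQ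

lemma prim_card (hodd : p ≠ 2) (a b c : ℤ) (ha : ¬ (p:ℤ) ∣ a)
    (hD : ¬ (p:ℤ) ∣ (c^2 - 4*a*b)) (ν : ℕ) (hν : ν ≠ 0) :
    ((Finset.univ.filter (fun z : ZMod (p^ν) × ZMod (p^ν) =>
        ((a:ℤ):ZMod (p^ν)) * z.1^2 + ((b:ℤ):ZMod (p^ν)) * z.2^2
          + ((c:ℤ):ZMod (p^ν)) * z.1 * z.2 = 0 ∧ (IsUnit z.1 ∨ IsUnit z.2))).card : ℤ)
      = (1 + legendreSym p (c^2 - 4*a*b)) * (p^ν).totient := by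
  have hp : p.Prime := Fact.out
  haveI : Fact (1 < p^ν) := ⟨Nat.one_lt_pow hν hp.one_lt⟩
  set R := ZMod (p^ν)
  set A := ((a:ℤ):R) with hA_def
  set B := ((b:ℤ):R) with hB_def
  set C := ((c:ℤ):R) with hC_def
  have hD0 : ((c^2 - 4*a*b : ℤ) : ZMod p) ≠ 0 := by
    rw [Ne, ZMod.intCast_zmod_eq_zero_iff_dvd]; exact hD
  let r : ZMod (p^ν) →+* ZMod p := ZMod.castHom (dvd_pow_self p hν) (ZMod p)
  have hr_cast : ∀ (x : ℤ), r ((x:ℤ) : R) = ((x:ℤ) : ZMod p) := fun x => map_intCast r x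
  have hresQ : ∀ z : R × R, A * z.1^2 + B * z.2^2 + C * z.1 * z.2 = 0 →
      ((a:ℤ):ZMod p) * (r z.1)^2 + ((b:ℤ):ZMod p) * (r z.2)^2
        + ((c:ℤ):ZMod p) * (r z.1) * (r z.2) = 0 := by
    intro z hz
    have := congrArg r hz
    simpa [map_add, map_mul, map_pow, hr_cast, hA_def, hB_def, hC_def] using this
  rcases legendreSym.eq_one_or_neg_one p hD0 with hχ | hχ
  · -- split case: χ = 1
    rw [hχ]
    have hsq : IsSquare ((c^2-4*a*b : ℤ) : ZMod p) := (legendreSym.eq_one_iff p hD0).mp hχ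
    -- obtain an integer square root of D mod p^ν
    obtain ⟨w, hw⟩ := hsq
    have hbase : ∃ s : ℤ, (p:ℤ) ∣ s^2 - (c^2-4*a*b) := by
      refine ⟨(w.val : ℤ), ?_⟩
      rw [← ZMod.intCast_zmod_eq_zero_iff_dvd]
      push_cast
      rw [show ((w.val : ℕ) : ZMod p) = w from by simp [ZMod.natCast_val, ZMod.cast_id]]
      have hw' := hw
      push_cast at hw'
      linear_combination -hw'
    obtain ⟨t, htD⟩ := sqrt_lift p hodd _ hD hbase ν
    have hpt : ¬ (p:ℤ) ∣ t := by
      intro hdvd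
      have h1 : (p:ℤ) ∣ t^2 - (c^2-4*a*b) := dvd_trans (dvd_pow_self _ hν) htD
      have h2 : (p:ℤ) ∣ t^2 := by rw [sq]; exact hdvd.mul_right t
      have h3 := dvd_sub h2 h1
      simp only [sub_sub_cancel] at h3
      exact hD h3
    set δ := ((t:ℤ) : R) with hδ_def
    have hδ2 : δ^2 = C^2 - 4*A*B := by
      have h0 : ((t^2 - (c^2-4*a*b) : ℤ) : R) = 0 := by
        rw [ZMod.intCast_zmod_eq_zero_iff_dvd]
        exact_mod_cast htD
      rw [Int.cast_sub, Int.cast_sub, Int.cast_mul, Int.cast_mul, Int.cast_pow, Int.cast_pow] at h0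
      rw [hδ_def, hA_def, hB_def, hC_def]
      push_cast
      linear_combination h0
    have h2unit : IsUnit (2 : R) := by
      have := isUnit_intCast_of_not_dvd p ν 2 (two_not_dvd p hodd)
      simpa using this
    have hAunit : IsUnit A := isUnit_intCast_of_not_dvd p ν a ha
    have h2A : IsUnit (2 * A) := h2unit.mul hAunit
    have hδp : r δ ≠ 0 := by
      rw [hδ_def, hr_cast, Ne, ZMod.intCast_zmod_eq_zero_iff_dvd]; exact hpt
    have h2p : (r (2:R)) ≠ 0 := by
      rw [show (2:R) = ((2:ℤ):R) by norm_cast, hr_cast, Ne, ZMod.intCast_zmod_eq_zero_iff_dvd]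
      exact two_not_dvd p hodd
    have hkey : Finset.univ.filter (fun z : R × R =>
        A * z.1^2 + B * z.2^2 + C * z.1 * z.2 = 0 ∧ (IsUnit z.1 ∨ IsUnit z.2))
      = Finset.univ.filter (fun z : R × R =>
        ((2*A) * z.1 + (C - δ) * z.2 = 0 ∧ IsUnit z.2) ∨ ((2*A) * z.1 + (C + δ) * z.2 = 0 ∧ IsUnit z.2)) := by
      apply Finset.filter_congr
      intro z _
      constructor
      · rintro ⟨hQ, hprim⟩
        have hLL : ((2*A) * z.1 + (C - δ) * z.2) * ((2*A) * z.1 + (C + δ) * z.2) = 0 := by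
          linear_combination (4*A) * hQ - z.2^2 * hδ2
        have hy : IsUnit z.2 := by
          by_contra hy
          have hy0 : r z.2 = 0 := by
            have := (isUnit_iff_residue p ν hν z.2)
            simp only [this] at hy
            simpa [r] using hy
          have hQp := hresQ z hQ
          rw [hy0] at hQp
          have hX : ((a:ℤ):ZMod p) * (r z.1)^2 = 0 := by linear_combination hQp
          have haZ : ((a:ℤ):ZMod p) ≠ 0 := by
            rw [Ne, ZMod.intCast_zmod_eq_zero_iff_dvd]; exact ha
          have hX0 : r z.1 = 0 := by
            rcases mul_eq_zero.mp hX with h | h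
            · exact absurd h haZ
            · exact pow_eq_zero_iff (n := 2) (by norm_num) |>.mp h
          have : ¬ IsUnit z.1 := by
            rw [isUnit_iff_residue p ν hν z.1]
            simpa [r] using hX0
          rcases hprim with h | h
          · exact this h
          · exact hy h
        -- not both L1 L2 nonunit
        have hyp : r z.2 ≠ 0 := by
          rw [isUnit_iff_residue p ν hν z.2] at hy
          simpa [r] using hy
        have hnotboth : r ((2*A) * z.1 + (C - δ) * z.2) ≠ 0 ∨ r ((2*A) * z.1 + (C + δ) * z.2) ≠ 0 := by
          by_contra hcon
          push_neg at hcon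
          obtain ⟨h1, h2⟩ := hcon
          have hsub : r ((2*A) * z.1 + (C + δ) * z.2) - r ((2*A) * z.1 + (C - δ) * z.2)
              = 2 * (r δ) * (r z.2) := by
            rw [← map_sub]
            have : ((2*A) * z.1 + (C + δ) * z.2) - ((2*A) * z.1 + (C - δ) * z.2)
                = (2:R) * δ * z.2 := by ring
            rw [this]
            rw [map_mul, map_mul]
            congr 1
            congr 1
            rw [show (2:R) = ((2:ℤ):R) by norm_cast, hr_cast]
            norm_cast
          rw [h1, h2, sub_zero] at hsub
          have h2Z : ((2:ZMod p)) ≠ 0 := by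
            have := h2p
            rwa [show r (2:R) = (2:ZMod p) from by
              rw [show (2:R) = ((2:ℤ):R) by norm_cast, hr_cast]; norm_cast] at this
          have := hsub.symm
          rcases mul_eq_zero.mp this with h | h
          · rcases mul_eq_zero.mp h with h' | h'
            · exact h2Z h'
            · exact hδp h'
          · exact hyp h
        rcases hnotboth with hL1 | hL2
        · -- L1 unit hence L2 = 0
          right
          refine ⟨?_, hy⟩
          have hL1unit : IsUnit ((2*A) * z.1 + (C - δ) * z.2) := by
            rw [isUnit_iff_residue p ν hν]
            exact hL1
          exact (hL1unit.mul_right_eq_zero).mp hLL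
        · left
          refine ⟨?_, hy⟩
          have hL2unit : IsUnit ((2*A) * z.1 + (C + δ) * z.2) := by
            rw [isUnit_iff_residue p ν hν]
            exact hL2
          have hLL' : ((2*A) * z.1 + (C + δ) * z.2) * ((2*A) * z.1 + (C - δ) * z.2) = 0 := by
            linear_combination hLL
          exact (hL2unit.mul_right_eq_zero).mp hLL'
      · rintro (⟨hL, hy⟩ | ⟨hL, hy⟩)
        · have h4AQ : (4*A) * (A * z.1^2 + B * z.2^2 + C * z.1 * z.2)
              = ((2*A) * z.1 + (C - δ) * z.2) * ((2*A) * z.1 + (C + δ) * z.2) := by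
            linear_combination z.2^2 * hδ2
          rw [hL, zero_mul] at h4AQ
          have h4A : IsUnit (4 * A : R) := by
            have : (4 : R) = 2 * 2 := by norm_num
            rw [show (4*A : R) = (2*2)*A from by rw [← this]]
            exact (h2unit.mul h2unit).mul hAunit
          refine ⟨(h4A.mul_right_eq_zero).mp h4AQ, Or.inr hy⟩
        · have h4AQ : (4*A) * (A * z.1^2 + B * z.2^2 + C * z.1 * z.2)
              = ((2*A) * z.1 + (C - δ) * z.2) * ((2*A) * z.1 + (C + δ) * z.2) := by
            linear_combination z.2^2 * hδ2
          rw [hL, mul_zero] at h4AQ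
          have h4A : IsUnit (4 * A : R) := by
            have : (4 : R) = 2 * 2 := by norm_num
            rw [show (4*A : R) = (2*2)*A from by rw [← this]]
            exact (h2unit.mul h2unit).mul hAunit
          refine ⟨(h4A.mul_right_eq_zero).mp h4AQ, Or.inr hy⟩
    rw [hkey, Finset.filter_or, Finset.card_union_of_disjoint, line_card _ _ _ h2A, line_card _ _ _ h2A]
    · push_cast; ring
    · rw [Finset.disjoint_left]
      rintro z hz1 hz2
      simp only [Finset.mem_filter, Finset.mem_univ, true_and] at hz1 hz2
      obtain ⟨hL1, hy⟩ := hz1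
      obtain ⟨hL2, -⟩ := hz2
      have hsub : (2:R) * δ * z.2 = 0 := by linear_combination hL2 - hL1
      have hδu : IsUnit δ := isUnit_intCast_of_not_dvd p ν t hpt
      have : IsUnit ((2:R) * δ * z.2) := (h2unit.mul hδu).mul hy
      exact this.ne_zero hsub
  · -- χ = -1 : no primitive solutions
    rw [hχ]
    have hns : ¬ IsSquare ((c^2-4*a*b : ℤ) : ZMod p) := (legendreSym.eq_neg_one_iff p).mp hχ
    have hempty : Finset.univ.filter (fun z : R × R =>
        A * z.1^2 + B * z.2^2 + C * z.1 * z.2 = 0 ∧ (IsUnit z.1 ∨ IsUnit z.2)) = ∅ := by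
      rw [Finset.filter_eq_empty_iff]
      rintro z - ⟨hQ, hprim⟩
      have haZ : ((a:ℤ):ZMod p) ≠ 0 := by
        intro h0
        rw [ZMod.intCast_zmod_eq_zero_iff_dvd] at h0
        -- p ∣ a would make D ≡ c² a square mod p
        apply hns
        have : ((c^2-4*a*b : ℤ) : ZMod p) = ((c:ℤ):ZMod p)^2 := by
          push_cast
          rw [show ((a:ℤ):ZMod p) = 0 from by rw [ZMod.intCast_zmod_eq_zero_iff_dvd]; exact h0]
          ring
        rw [this]
        exact ⟨((c:ℤ):ZMod p), (sq _)⟩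
      obtain ⟨hX, hY⟩ := field_sol_zero p hodd a b c haZ hns (r z.1) (r z.2) (hresQ z hQ)
      rcases hprim with h | h
      · rw [isUnit_iff_residue p ν hν] at h
        exact h (by simpa [r] using hX)
      · rw [isUnit_iff_residue p ν hν] at h
        exact h (by simpa [r] using hY)
    rw [hempty]
    simp

def cntQ (a b c : ℤ) (m : ℕ) [NeZero m] : ℕ :=
  (Finset.univ.filter (fun z : ZMod m × ZMod m =>
    ((a:ℤ):ZMod m) * z.1^2 + ((b:ℤ):ZMod m) * z.2^2 + ((c:ℤ):ZMod m) * z.1 * z.2 = 0)).card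


lemma imp_card (a b c : ℤ) (ν : ℕ) :
    (Finset.univ.filter (fun z : ZMod (p^(ν+2)) × ZMod (p^(ν+2)) =>
      (((a:ℤ):ZMod (p^(ν+2))) * z.1^2 + ((b:ℤ):ZMod (p^(ν+2))) * z.2^2
        + ((c:ℤ):ZMod (p^(ν+2))) * z.1 * z.2 = 0)
      ∧ ¬(IsUnit z.1 ∨ IsUnit z.2))).card = p^2 * cntQ a b c (p^ν) := by
  have hp : p.Prime := Fact.out
  have hppos : 0 < p := hp.pos
  -- key integer divisibility equivalence
  have keydvd : ∀ x y : ℕ, ((p:ℤ)^(ν+2) ∣ a*(p*x)^2 + b*(p*y)^2 + c*(p*x)*(p*y))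
      ↔ ((p:ℤ)^ν ∣ a*x^2 + b*y^2 + c*x*y) := by
    intro x y
    have h1 : (a*((p:ℤ)*x)^2 + b*((p:ℤ)*y)^2 + c*((p:ℤ)*x)*((p:ℤ)*y) : ℤ)
        = (p:ℤ)^2 * (a*x^2 + b*y^2 + c*x*y) := by ring
    have h2 : ((p:ℤ))^(ν+2) = (p:ℤ)^2 * (p:ℤ)^ν := by ring
    rw [h1, h2]
    exact mul_dvd_mul_iff_left (pow_ne_zero 2 (by exact_mod_cast hppos.ne'))
  -- nonunit means p divides val
  have hnu : ∀ x : ZMod (p^(ν+2)), ¬ IsUnit x ↔ p ∣ x.val := by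
    intro x
    rw [isUnit_iff_residue p (ν+2) (by omega) x]
    simp only [not_not, ZMod.castHom_apply]
    rw [show (ZMod.cast x : ZMod p) = ((x.val : ℕ) : ZMod p) from by
      rw [← ZMod.natCast_val]]
    rw [ZMod.natCast_eq_zero_iff]
  -- the ZMod-equation as int dvd
  have hzeq : ∀ (m : ℕ) (_ : NeZero m) (x y : ℕ),
      (((a:ℤ):ZMod m) * ((x:ℕ):ZMod m)^2 + ((b:ℤ):ZMod m) * ((y:ℕ):ZMod m)^2
        + ((c:ℤ):ZMod m) * ((x:ℕ):ZMod m) * ((y:ℕ):ZMod m) = 0)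
      ↔ ((m:ℤ) ∣ a*x^2 + b*y^2 + c*x*y) := by
    intro m _ x y
    rw [← ZMod.intCast_zmod_eq_zero_iff_dvd]
    push_cast
    constructor <;> intro h <;> linear_combination h
  -- Step 1: bijection to middle level  (ZMod (p^ν * p))
  have step1 : (Finset.univ.filter (fun z : ZMod (p^(ν+2)) × ZMod (p^(ν+2)) =>
      (((a:ℤ):ZMod (p^(ν+2))) * z.1^2 + ((b:ℤ):ZMod (p^(ν+2))) * z.2^2
        + ((c:ℤ):ZMod (p^(ν+2))) * z.1 * z.2 = 0)
      ∧ ¬(IsUnit z.1 ∨ IsUnit z.2))).card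
    = (Finset.univ.filter (fun w : ZMod (p^ν * p) × ZMod (p^ν * p) =>
        ((a:ℤ):ZMod (p^ν)) * (ZMod.castHom (dvd_mul_right _ _) (ZMod (p^ν)) w.1)^2
        + ((b:ℤ):ZMod (p^ν)) * (ZMod.castHom (dvd_mul_right _ _) (ZMod (p^ν)) w.2)^2
        + ((c:ℤ):ZMod (p^ν)) * (ZMod.castHom (dvd_mul_right _ _) (ZMod (p^ν)) w.1)
          * (ZMod.castHom (dvd_mul_right _ _) (ZMod (p^ν)) w.2) = 0)).card := by
    have epow : p^(ν+2) = p * (p^ν * p) := by ring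
    have hlt1 : ∀ v : ℕ, v < p^ν * p → p * v < p^(ν+2) := by
      intro v hv
      rw [epow]
      exact (Nat.mul_lt_mul_left hppos).mpr hv
    have hlt2 : ∀ v : ℕ, v < p^(ν+2) → v / p < p^ν * p := by
      intro v hv
      exact Nat.div_lt_of_lt_mul (by rw [← epow]; exact hv)
    have hcastQ : ∀ (x y : ℕ),
        (((a:ℤ):ZMod (p^ν)) * ((x:ℕ):ZMod (p^ν))^2 + ((b:ℤ):ZMod (p^ν)) * ((y:ℕ):ZMod (p^ν))^2
          + ((c:ℤ):ZMod (p^ν)) * ((x:ℕ):ZMod (p^ν)) * ((y:ℕ):ZMod (p^ν)) = 0)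
        ↔ ((p:ℤ)^ν ∣ a*x^2 + b*y^2 + c*x*y) := by
      intro x y
      rw [hzeq (p^ν) inferInstance x y]
      push_cast
      rfl
    have hcastQ2 : ∀ (x y : ℕ),
        (((a:ℤ):ZMod (p^(ν+2))) * ((x:ℕ):ZMod (p^(ν+2)))^2 + ((b:ℤ):ZMod (p^(ν+2))) * ((y:ℕ):ZMod (p^(ν+2)))^2
          + ((c:ℤ):ZMod (p^(ν+2))) * ((x:ℕ):ZMod (p^(ν+2))) * ((y:ℕ):ZMod (p^(ν+2))) = 0)
        ↔ ((p:ℤ)^(ν+2) ∣ a*x^2 + b*y^2 + c*x*y) := by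
      intro x y
      rw [hzeq (p^(ν+2)) inferInstance x y]
      push_cast
      rfl
    have hch : ∀ x : ℕ, ZMod.castHom (dvd_mul_right (p^ν) p) (ZMod (p^ν)) ((x : ℕ) : ZMod (p^ν * p))
        = ((x:ℕ) : ZMod (p^ν)) := fun x => map_natCast _ x
    apply Finset.card_bij'
      (i := fun z _ => (((z.1.val / p : ℕ) : ZMod (p^ν * p)), ((z.2.val / p : ℕ) : ZMod (p^ν * p))))
      (j := fun w _ => (((p * w.1.val : ℕ) : ZMod (p^(ν+2))), ((p * w.2.val : ℕ) : ZMod (p^(ν+2)))))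
    · intro z hz
      simp only [Finset.mem_filter, Finset.mem_univ, true_and] at hz ⊢
      obtain ⟨hQ, hnun⟩ := hz
      push_neg at hnun
      have hd1 : p ∣ z.1.val := (hnu z.1).mp hnun.1
      have hd2 : p ∣ z.2.val := (hnu z.2).mp hnun.2
      rw [hch, hch, hcastQ]
      have hQ' : (p:ℤ)^(ν+2) ∣ a*(z.1.val)^2 + b*(z.2.val)^2 + c*(z.1.val)*(z.2.val) := by
        rw [← hcastQ2]
        rw [show ((z.1.val : ℕ) : ZMod (p^(ν+2))) = z.1 from by simp [ZMod.natCast_val, ZMod.cast_id],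
            show ((z.2.val : ℕ) : ZMod (p^(ν+2))) = z.2 from by simp [ZMod.natCast_val, ZMod.cast_id]]
        exact hQ
      have e1 : (z.1.val : ℤ) = (p:ℤ) * ((z.1.val / p : ℕ) : ℤ) := by
        exact_mod_cast congrArg (Nat.cast : ℕ → ℤ) (Nat.mul_div_cancel' hd1).symm
      have e2 : (z.2.val : ℤ) = (p:ℤ) * ((z.2.val / p : ℕ) : ℤ) := by
        exact_mod_cast congrArg (Nat.cast : ℕ → ℤ) (Nat.mul_div_cancel' hd2).symm
      rw [← keydvd]
      rw [e1, e2] at hQ'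
      exact hQ'
    · intro w hw
      simp only [Finset.mem_filter, Finset.mem_univ, true_and] at hw ⊢
      constructor
      · rw [hcastQ2]
        push_cast
        rw [keydvd]
        rw [← hcastQ]
        rw [show ((w.1.val : ℕ) : ZMod (p^ν)) = ZMod.castHom (dvd_mul_right (p^ν) p) (ZMod (p^ν)) w.1 from by
              rw [← hch w.1.val]; congr 1; simp [ZMod.natCast_val, ZMod.cast_id],
            show ((w.2.val : ℕ) : ZMod (p^ν)) = ZMod.castHom (dvd_mul_right (p^ν) p) (ZMod (p^ν)) w.2 from by
              rw [← hch w.2.val]; congr 1; simp [ZMod.natCast_val, ZMod.cast_id]]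
        exact hw
      · push_neg
        constructor <;>
        · rw [hnu, ZMod.val_natCast_of_lt (hlt1 _ (ZMod.val_lt _))]
          exact Dvd.intro _ rfl
    · intro z hz
      simp only [Finset.mem_filter, Finset.mem_univ, true_and] at hz
      obtain ⟨-, hnun⟩ := hz
      push_neg at hnun
      have hd1 : p ∣ z.1.val := (hnu z.1).mp hnun.1
      have hd2 : p ∣ z.2.val := (hnu z.2).mp hnun.2
      have : ∀ (x : ZMod (p^(ν+2))), p ∣ x.val →
          ((p * (((x.val / p : ℕ) : ZMod (p^ν * p)).val) : ℕ) : ZMod (p^(ν+2))) = x := by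
        intro x hx
        rw [ZMod.val_natCast_of_lt (hlt2 _ (ZMod.val_lt x)), Nat.mul_div_cancel' hx]
        simp [ZMod.natCast_val, ZMod.cast_id]
      exact Prod.ext (this z.1 hd1) (this z.2 hd2)
    · intro w hw
      have : ∀ (x : ZMod (p^ν * p)),
          ((((p * x.val : ℕ) : ZMod (p^(ν+2))).val / p : ℕ) : ZMod (p^ν * p)) = x := by
        intro x
        rw [ZMod.val_natCast_of_lt (hlt1 _ (ZMod.val_lt x)), Nat.mul_div_cancel_left _ hppos]
        simp [ZMod.natCast_val, ZMod.cast_id]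
      exact Prod.ext (this w.1) (this w.2)
  rw [step1]
  -- Step 2: fiber counting
  have step2 := fiber_count (α := ZMod (p^ν * p) × ZMod (p^ν * p)) (β := ZMod (p^ν) × ZMod (p^ν))
    (fun w => (ZMod.castHom (dvd_mul_right _ _) (ZMod (p^ν)) w.1,
               ZMod.castHom (dvd_mul_right _ _) (ZMod (p^ν)) w.2)) (p*p)
    (fun b => by
      have : (Finset.univ.filter (fun w : ZMod (p^ν * p) × ZMod (p^ν * p) =>
          (ZMod.castHom (dvd_mul_right _ _) (ZMod (p^ν)) w.1,
           ZMod.castHom (dvd_mul_right _ _) (ZMod (p^ν)) w.2) = b)).card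
          = ((Finset.univ.filter (fun w1 : ZMod (p^ν * p) =>
              ZMod.castHom (dvd_mul_right _ _) (ZMod (p^ν)) w1 = b.1)) ×ˢ
             (Finset.univ.filter (fun w2 : ZMod (p^ν * p) =>
              ZMod.castHom (dvd_mul_right _ _) (ZMod (p^ν)) w2 = b.2))).card := by
        congr 1
        ext w
        simp only [Finset.mem_filter, Finset.mem_product, Finset.mem_univ, true_and, Prod.ext_iff]
      rw [this, Finset.card_product, zmod_cast_fiber_card, zmod_cast_fiber_card])
    (fun z : ZMod (p^ν) × ZMod (p^ν) =>
      ((a:ℤ):ZMod (p^ν)) * z.1^2 + ((b:ℤ):ZMod (p^ν)) * z.2^2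
        + ((c:ℤ):ZMod (p^ν)) * z.1 * z.2 = 0)
  dsimp only at step2
  rw [step2, cntQ, sq]
section Chunk7
variable (p : ℕ) [Fact p.Prime]

lemma cnt_one (a b c : ℤ) : cntQ a b c (p^0) = 1 := by
  rw [cntQ]
  haveI : Subsingleton (ZMod (p^0)) := by rw [pow_zero]; infer_instance
  rw [Finset.filter_true_of_mem (fun z _ => Subsingleton.elim _ _)]
  rw [Finset.card_univ, Fintype.card_prod, ZMod.card, pow_zero]
  norm_num

lemma nonunit_iff_zero (x : ZMod (p^1)) : ¬ IsUnit x ↔ x = 0 := by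
  rw [isUnit_iff_residue p 1 one_ne_zero x]
  simp only [not_not]
  constructor
  · intro h
    have h2 : p ∣ x.val := by
      rw [ZMod.castHom_apply, show (ZMod.cast x : ZMod p) = ((x.val : ℕ) : ZMod p) from by
        rw [← ZMod.natCast_val], ZMod.natCast_eq_zero_iff] at h
      exact h
    have h3 : x.val < p := lt_of_lt_of_eq (ZMod.val_lt x) (pow_one p)
    have h4 : x.val = 0 := Nat.eq_zero_of_dvd_of_lt h2 h3
    exact (ZMod.val_eq_zero x).mp h4
  · intro h
    rw [h]
    simp

lemma cnt_p (hodd : p ≠ 2) (a b c : ℤ) (ha : ¬ (p:ℤ) ∣ a) (hD : ¬ (p:ℤ) ∣ (c^2-4*a*b)) :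
    (cntQ a b c (p^1) : ℤ) = (1 + legendreSym p (c^2-4*a*b)) * (p^1).totient + 1 := by
  have hp : p.Prime := Fact.out
  haveI : Fact (1 < p^1) := ⟨by simpa using hp.one_lt⟩
  have hsplit := Finset.card_filter_add_card_filter_not
    (s := Finset.univ.filter (fun z : ZMod (p^1) × ZMod (p^1) =>
      ((a:ℤ):ZMod (p^1)) * z.1^2 + ((b:ℤ):ZMod (p^1)) * z.2^2 + ((c:ℤ):ZMod (p^1)) * z.1 * z.2 = 0))
    (p := fun z => IsUnit z.1 ∨ IsUnit z.2)
  rw [Finset.filter_filter, Finset.filter_filter] at hsplit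
  have h2 : (Finset.univ.filter (fun z : ZMod (p^1) × ZMod (p^1) =>
      (((a:ℤ):ZMod (p^1)) * z.1^2 + ((b:ℤ):ZMod (p^1)) * z.2^2 + ((c:ℤ):ZMod (p^1)) * z.1 * z.2 = 0)
        ∧ ¬(IsUnit z.1 ∨ IsUnit z.2))) = {((0:ZMod (p^1)), (0:ZMod (p^1)))} := by
    ext z
    simp only [Finset.mem_filter, Finset.mem_univ, true_and, Finset.mem_singleton, Prod.ext_iff]
    constructor
    · rintro ⟨-, hnp⟩
      push_neg at hnp
      exact ⟨(nonunit_iff_zero p _).mp hnp.1, (nonunit_iff_zero p _).mp hnp.2⟩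
    · rintro ⟨h1', h2'⟩
      rw [h1', h2']
      refine ⟨by ring, ?_⟩
      push_neg
      constructor <;> · rw [nonunit_iff_zero p]
    
  have h2card : (Finset.univ.filter (fun z : ZMod (p^1) × ZMod (p^1) =>
      (((a:ℤ):ZMod (p^1)) * z.1^2 + ((b:ℤ):ZMod (p^1)) * z.2^2 + ((c:ℤ):ZMod (p^1)) * z.1 * z.2 = 0)
        ∧ ¬(IsUnit z.1 ∨ IsUnit z.2))).card = 1 := by rw [h2]; rfl
  have h1 := prim_card p hodd a b c ha hD 1 one_ne_zero
  rw [cntQ]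
  rw [← hsplit, h2card]
  push_cast
  rw [h1]
  try ring

lemma cnt_rec (hodd : p ≠ 2) (a b c : ℤ) (ha : ¬ (p:ℤ) ∣ a) (hD : ¬ (p:ℤ) ∣ (c^2-4*a*b)) (ν : ℕ) :
    (cntQ a b c (p^(ν+2)) : ℤ)
      = (1 + legendreSym p (c^2-4*a*b)) * (p^(ν+2)).totient + p^2 * cntQ a b c (p^ν) := by
  have hsplit := Finset.card_filter_add_card_filter_not
    (s := Finset.univ.filter (fun z : ZMod (p^(ν+2)) × ZMod (p^(ν+2)) =>
      ((a:ℤ):ZMod (p^(ν+2))) * z.1^2 + ((b:ℤ):ZMod (p^(ν+2))) * z.2^2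
        + ((c:ℤ):ZMod (p^(ν+2))) * z.1 * z.2 = 0))
    (p := fun z => IsUnit z.1 ∨ IsUnit z.2)
  rw [Finset.filter_filter, Finset.filter_filter] at hsplit
  have h1 := prim_card p hodd a b c ha hD (ν+2) (by omega)
  have h3 := imp_card p a b c ν
  rw [cntQ, ← hsplit, h3]
  push_cast
  rw [h1]
  try ring

lemma main_aux (hodd : p ≠ 2) (a b c : ℤ) (ha : ¬ (p:ℤ) ∣ a) (hD : ¬ (p:ℤ) ∣ (c^2-4*a*b)) :
    ∀ ν : ℕ, (cntQ a b c (p^ν) : ℤ)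
      = ((p^ν).totient : ℤ) * (1 + legendreSym p (c^2-4*a*b)) * ((ν+1)/2 : ℕ)
        + (p:ℤ)^(2*(ν - (ν+1)/2)) := by
  have hp : p.Prime := Fact.out
  intro ν
  induction ν using Nat.strong_induction_on with
  | _ ν ih =>
    match ν with
    | 0 =>
      rw [cnt_one]
      norm_num
    | 1 =>
      rw [cnt_p p hodd a b c ha hD]
      norm_num
      try ring
    | (k+2) =>
      rw [cnt_rec p hodd a b c ha hD k, ih k (by omega)]
      have e1 : (k+2+1)/2 = (k+1)/2 + 1 := by omega
      have e2 : 2*(k+2 - (k+2+1)/2) = 2*(k - (k+1)/2) + 2 := by omega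
      rw [e2, e1]
      have e3 : ((p:ℤ))^(2*(k - (k+1)/2) + 2) = (p:ℤ)^(2*(k-(k+1)/2)) * (p:ℤ)^2 := by
        rw [pow_add]
      rw [e3]
      rcases Nat.eq_zero_or_pos k with hk | hk
    -- k = 0 : the (k+1)/2 coefficient is 0
      · subst hk
        norm_num
        try ring
      · have etot : (p^(k+2)).totient = p^2 * (p^k).totient := by
          rw [Nat.totient_prime_pow hp (by omega), Nat.totient_prime_pow hp hk]
          have : k + 2 - 1 = (k-1) + 2 := by omega
          rw [this, pow_add]
          ring
        rw [etot]
        push_cast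
        ring
end Chunk7
section Chunk8

lemma cnt_swap (a b c : ℤ) (m : ℕ) [NeZero m] : cntQ a b c m = cntQ b a c m := by
  rw [cntQ, cntQ]
  apply Finset.card_bij' (i := fun z _ => (z.2, z.1)) (j := fun z _ => (z.2, z.1))
  all_goals intro z hz
  any_goals rfl
  all_goals simp only [Finset.mem_filter, Finset.mem_univ, true_and] at hz ⊢
  all_goals linear_combination hz

lemma cnt_shear (a b c : ℤ) (m : ℕ) [NeZero m] : cntQ a b c m = cntQ (a+b+c) b (2*b+c) m := by
  rw [cntQ, cntQ]
  apply Finset.card_bij' (i := fun z _ => (z.1, z.2 - z.1)) (j := fun z _ => (z.1, z.1 + z.2))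
  all_goals intro z hz
  any_goals (ext <;> simp)
  all_goals simp only [Finset.mem_filter, Finset.mem_univ, true_and] at hz ⊢
  all_goals push_cast at hz ⊢
  all_goals linear_combination hz

lemma rhoQ_cnt (a b c : ℤ) (m : ℕ) [NeZero m] : rhoQ a b c m = cntQ a b c m := by
  rw [rhoQ_eq_cnt, cntQ]

end Chunk8

section Chunk9
variable (p : ℕ) [Fact p.Prime]

lemma rho_formula (hodd : p ≠ 2) (a b c : ℤ) (hD : ¬ (p:ℤ) ∣ (c^2 - 4*a*b)) (ν : ℕ) :
    (rhoQ a b c (p^ν) : ℤ)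
      = ((p^ν).totient : ℤ) * (1 + legendreSym p (c^2 - 4*a*b)) * ((ν+1)/2 : ℕ)
        + (p:ℤ)^(2*(ν - (ν+1)/2)) := by
  rw [rhoQ_cnt]
  by_cases hpa : (p:ℤ) ∣ a
  · by_cases hpb : (p:ℤ) ∣ b
    · have hpc : ¬ (p:ℤ) ∣ c := by
        intro hc
        apply hD
        have h1 : (p:ℤ) ∣ c^2 := by rw [sq]; exact hc.mul_right c
        have h2 : (p:ℤ) ∣ 4*a*b := by
          have := hpa.mul_left 4
          exact this.mul_right b
        exact dvd_sub h1 h2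
      have hpabc : ¬ (p:ℤ) ∣ (a+b+c) := by
        intro h
        apply hpc
        have h1 := dvd_sub h hpa
        have h2 : a + b + c - a = b + c := by ring
        rw [h2] at h1
        have h3 := dvd_sub h1 hpb
        have h4 : b + c - b = c := by ring
        rwa [h4] at h3
      have hD' : ¬ (p:ℤ) ∣ ((2*b+c)^2 - 4*(a+b+c)*b) := by
        rw [show (2*b+c)^2 - 4*(a+b+c)*b = c^2 - 4*a*b from by ring]
        exact hD
      have h := main_aux p hodd (a+b+c) b (2*b+c) hpabc hD' ν
      rw [cnt_shear]
      rw [h]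
      rw [show (2*b+c)^2 - 4*(a+b+c)*b = c^2 - 4*a*b from by ring]
    · have hD' : ¬ (p:ℤ) ∣ (c^2 - 4*b*a) := by
        rw [show c^2 - 4*b*a = c^2 - 4*a*b from by ring]
        exact hD
      have h := main_aux p hodd b a c hpb hD' ν
      rw [cnt_swap]
      rw [h]
      rw [show c^2 - 4*b*a = c^2 - 4*a*b from by ring]
  · have h := main_aux p hodd a b c hpa hD ν
    rw [h]

lemma rho_bound (hodd : p ≠ 2) (a b c : ℤ) (hD : ¬ (p:ℤ) ∣ (c^2 - 4*a*b)) (ν : ℕ) :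
    rhoQ a b c (p^ν) ≤ (ν + 1) * p^ν := by
  have hp : p.Prime := Fact.out
  have hEq := rho_formula p hodd a b c hD ν
  have hD0 : ((c^2-4*a*b : ℤ) : ZMod p) ≠ 0 := by
    rw [Ne, ZMod.intCast_zmod_eq_zero_iff_dvd]; exact hD
  have hp1 : (1:ℤ) ≤ (p:ℤ) := by exact_mod_cast hp.one_le
  have hT : ((p^ν).totient : ℤ) ≤ (p:ℤ)^ν := by
    have := Nat.totient_le (p^ν)
    exact_mod_cast this
  have hT0 : (0:ℤ) ≤ ((p^ν).totient : ℤ) := by positivity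
  rw [← Nat.cast_le (α := ℤ)]
  push_cast
  rw [hEq]
  rcases Nat.eq_zero_or_pos ν with hν | hν
  · subst hν
    norm_num
  rcases legendreSym.eq_one_or_neg_one p hD0 with hχ | hχ
  · rw [hχ]
    rcases Nat.even_or_odd ν with ⟨m, hm⟩ | ⟨m, hm⟩
    · -- even : ν = m + m
      have e1 : ((ν+1)/2) = m := by omega
      have e2 : 2*(ν - (ν+1)/2) = ν := by omega
      rw [e2, e1]
      have hmν : (ν:ℤ) = 2*m := by exact_mod_cast (by omega : ν = 2*m)
      have hpow0 : (0:ℤ) ≤ (p:ℤ)^ν := by positivity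
      nlinarith [mul_nonneg (by positivity : (0:ℤ) ≤ 2*(m:ℤ)) (sub_nonneg.mpr hT)]
    · -- odd : ν = 2m+1
      have e1 : ((ν+1)/2) = m+1 := by omega
      have e2 : 2*(ν - (ν+1)/2) = 2*m := by omega
      rw [e2, e1]
      have hTot : ((p^ν).totient : ℤ) = (p:ℤ)^(2*m) * ((p:ℤ) - 1) := by
        rw [Nat.totient_prime_pow hp hν, show ν - 1 = 2*m from by omega]
        push_cast [Nat.cast_sub hp.one_le]
        ring
      rw [hTot]
      have hpν : (p:ℤ)^ν = (p:ℤ)^(2*m) * (p:ℤ) := by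
        rw [show ν = 2*m+1 from by omega, pow_succ]
      rw [hpν]
      have hν' : (ν:ℤ) = 2*(m:ℤ)+1 := by exact_mod_cast (by omega : ν = 2*m+1)
      have key : (((2*(m:ℤ)+1)+1)) * ((p:ℤ)^(2*m) * (p:ℤ))
          - ((p:ℤ)^(2*m) * ((p:ℤ)-1) * (1+1) * ((m:ℤ)+1) + (p:ℤ)^(2*m))
          = (2*(m:ℤ)+1) * (p:ℤ)^(2*m) := by ring
      push_cast
      rw [hν']
      linarith [key, mul_nonneg (show (0:ℤ) ≤ 2*(m:ℤ)+1 by positivity)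
        (show (0:ℤ) ≤ (p:ℤ)^(2*m) by positivity)]
  · rw [hχ]
    have e0 : (1 + (-1) : ℤ) = 0 := by norm_num
    rw [e0, mul_zero, zero_mul, zero_add]
    have h1 : (p:ℤ)^(2*(ν - (ν+1)/2)) ≤ (p:ℤ)^ν := by
      apply pow_le_pow_right₀ hp1
      omega
    have h2 : (p:ℤ)^ν ≤ ((ν:ℤ)+1) * (p:ℤ)^ν := by
      nlinarith [pow_nonneg (by linarith : (0:ℤ) ≤ (p:ℤ)) ν]
    linarith

end Chunk9


theorem stmt10 (a b c : ℤ) (hprim : Int.gcd (Int.gcd a b) c = 1)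
    (hirr : ¬ IsSquare (c ^ 2 - 4 * a * b)) (p : ℕ) [Fact p.Prime] (hodd : p ≠ 2)
    (hndvd : ¬ (p : ℤ) ∣ (c ^ 2 - 4 * a * b)) (ν : ℕ) :
    (rhoQ a b c (p ^ ν) : ℤ) =
      (Nat.totient (p ^ ν) : ℤ) * (1 + legendreSym p (c ^ 2 - 4 * a * b)) * ((ν + 1) / 2 : ℕ) +
        (p : ℤ) ^ (2 * (ν - (ν + 1) / 2)) ∧
    rhoQ a b c (p ^ ν) ≤ (ν + 1) * p ^ ν := by
  constructor
  · exact rho_formula p hodd a b c hndvd ν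
  · exact rho_bound p hodd a b c hndvd ν
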